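/- In Minkowski space ℝ⁴ with the path topology P generated by Euclidean open sets together with the sets K(x, ε) = {x} ∪ {y : |y−x| < ε, Q(y−x) < 0}, every point has a countable neighbourhood basis (P is first countable), given by {K(x, 1/n) : n ∈ ℕ}. -/

import Mathlib

open Topology TopologicalSpace Filter

noncomputable section

/-- The Minkowski quadratic form of signature (+,−,−,−) on `ℝ⁴`. -/
def Q (v : EuclideanSpace ℝ (Fin 4)) : ℝ := v 0 ^ 2 - v 1 ^ 2 - v 2 ^ 2 - v 3 ^ 2

/-- Bounded time-cone with vertex: `K(x, ε) = {x} ∪ {y : ‖y − x‖ < ε, Q(y−x) < 0}`. -/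
def K (x : EuclideanSpace ℝ (Fin 4)) (ε : ℝ) : Set (EuclideanSpace ℝ (Fin 4)) :=
  {x} ∪ {y | ‖y - x‖ < ε ∧ Q (y - x) < 0}

/-- The path topology `P`: generated by the Euclidean open sets together with the
sets `K(x, ε)`. -/
def P : TopologicalSpace (EuclideanSpace ℝ (Fin 4)) :=
  generateFrom ({U | IsOpen U} ∪ {S | ∃ x, ∃ ε : ℝ, 0 < ε ∧ S = K x ε})

lemma Q_continuous : Continuous Q := by
  unfold Q
  fun_prop

lemma K_mono (x : EuclideanSpace ℝ (Fin 4)) {ε ε' : ℝ} (h : ε ≤ ε') : K x ε ⊆ K x ε' := by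
  rintro z (hz | ⟨h1, h2⟩)
  · exact Or.inl hz
  · exact Or.inr ⟨h1.trans_le h, h2⟩

lemma mem_K_self (x : EuclideanSpace ℝ (Fin 4)) (ε : ℝ) : x ∈ K x ε := Or.inl rfl

lemma exists_K_subset {U : Set (EuclideanSpace ℝ (Fin 4))}
    (hU : GenerateOpen ({U | IsOpen U} ∪ {S | ∃ x, ∃ ε : ℝ, 0 < ε ∧ S = K x ε}) U) :
    ∀ x ∈ U, ∃ ε > 0, K x ε ⊆ U := by
  induction hU with
  | basic S hS =>
    intro x hx
    rcases hS with hS | ⟨y, δ, hδ, rfl⟩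
    · rcases Metric.isOpen_iff.mp (show IsOpen S from hS) x hx with ⟨ε, hε, hball⟩
      refine ⟨ε, hε, ?_⟩
      rintro z (rfl | ⟨h1, _⟩)
      · exact hx
      · exact hball (by simpa [dist_eq_norm] using h1)
    · rcases hx with rfl | ⟨h1, h2⟩
      · exact ⟨δ, hδ, subset_rfl⟩
      · -- x ≠ y possibly; Q (x - y) < 0 and ‖x - y‖ < δ
        have hopen : IsOpen {v | Q v < 0} := isOpen_lt Q_continuous continuous_const
        rcases Metric.isOpen_iff.mp hopen (x - y) h2 with ⟨ε₁, hε₁, hb⟩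
        refine ⟨min ε₁ (δ - ‖x - y‖), lt_min hε₁ (by linarith), ?_⟩
        rintro z (rfl | ⟨hz1, _⟩)
        · exact Or.inr ⟨h1, h2⟩
        · refine Or.inr ⟨?_, ?_⟩
          · have : ‖z - y‖ ≤ ‖z - x‖ + ‖x - y‖ := by
              simpa using norm_sub_le_norm_sub_add_norm_sub z x y
            have := hz1.trans_le (min_le_right _ _)
            linarith [norm_sub_le_norm_sub_add_norm_sub z x y]
          · apply hb
            have : dist (z - y) (x - y) = ‖z - x‖ := by
              rw [dist_eq_norm]; congr 1; abel
            rw [Metric.mem_ball, this]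
            exact hz1.trans_le (min_le_left _ _)
  | univ => exact fun x _ => ⟨1, one_pos, fun _ _ => trivial⟩
  | inter S T _ _ ihS ihT =>
    intro x hx
    rcases ihS x hx.1 with ⟨ε, hε, hεS⟩
    rcases ihT x hx.2 with ⟨ε', hε', hεT⟩
    exact ⟨min ε ε', lt_min hε hε',
      fun z hz => ⟨hεS (K_mono x (min_le_left _ _) hz), hεT (K_mono x (min_le_right _ _) hz)⟩⟩
  | sUnion S _ ih =>
    rintro x ⟨U, hU, hxU⟩
    rcases ih U hU x hxU with ⟨ε, hε, hsub⟩
    exact ⟨ε, hε, hsub.trans (Set.subset_sUnion_of_mem hU)⟩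

lemma K_isOpen (x : EuclideanSpace ℝ (Fin 4)) {ε : ℝ} (hε : 0 < ε) : P.IsOpen (K x ε) :=
  GenerateOpen.basic _ (Or.inr ⟨x, ε, hε, rfl⟩)

/-- The path topology is first countable: `{K(x, 1/n) : 0 < n}` is a neighbourhood
basis at each point `x`. -/
theorem path_topology_first_countable (x : EuclideanSpace ℝ (Fin 4)) :
    (@nhds _ P x).HasBasis (fun n : ℕ => 0 < n) (fun n : ℕ => K x (1 / n)) := by
  constructor
  intro t
  constructor
  · intro ht
    rcases (@mem_nhds_iff _ P x t).mp ht with ⟨U, hUt, hU, hxU⟩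
    rcases exists_K_subset hU x hxU with ⟨ε, hε, hsub⟩
    rcases exists_nat_one_div_lt hε with ⟨n, hn⟩
    refine ⟨n + 1, Nat.succ_pos n, ?_⟩
    have : (1 : ℝ) / (n + 1) ≤ ε := by
      have : (0:ℝ) < n + 1 := by positivity
      push_cast at hn ⊢
      linarith
    have := ((K_mono x this).trans hsub).trans hUt
    simpa using this
  · rintro ⟨n, hn, hsub⟩
    refine (@mem_nhds_iff _ P x t).mpr ⟨K x (1 / n), hsub, K_isOpen x ?_, mem_K_self x _⟩
    positivity
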